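/- Equip E := ℂ^ℕ with the product σ-algebra of countably many copies of the Borel σ-algebra of ℂ, and define the equivalence relation x ∼ y on E by: there exists N such that xₙ = yₙ for all n ≥ N. Let σ : E → ℂ be a closed-valued open-measurable multifunction and define its tail part σ_∼(x) := ⋂_{y ∼ x} σ(y). Then σ_∼ is universally open-measurable: for every open U ⊆ ℂ and every finite measure μ on E, the set {x | σ_∼(x) ∩ U ≠ ∅} lies in the μ-completion of the product σ-algebra. -/

import Mathlib

open MeasureTheory Set Filter Topology TopologicalSpace
open scoped ENNReal
open scoped ENNReal

theorem analyticSet_nullMeasurableSet {α : Type*} [TopologicalSpace α] [PolishSpace α]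
    [MeasurableSpace α] [BorelSpace α] {s : Set α} (hs : AnalyticSet s)
    (μ : Measure α) [IsFiniteMeasure μ] : NullMeasurableSet s μ := by
  have key : ∀ m' : ℝ≥0∞, m' < μ s → ∃ K, IsCompact K ∧ K ⊆ s ∧ m' ≤ μ K := by
    intro m' hm'
    rw [AnalyticSet_def] at hs
    rcases hs with rfl | ⟨f, hf, hrange⟩
    · simp at hm'
    have step : ∀ (n : ℕ) (v : ℕ → ℕ), m' < μ (f '' {x | ∀ i < n, x i ≤ v i}) →
        ∃ k, m' < μ (f '' {x | ∀ i < n + 1, x i ≤ Function.update v n k i}) := by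
      intro n v hv
      have hmono : Monotone (fun k : ℕ => f '' {x | (∀ i < n, x i ≤ v i) ∧ x n ≤ k}) :=
        fun a b hab => image_mono (fun x hx => ⟨hx.1, hx.2.trans hab⟩)
      have hU : {x : ℕ → ℕ | ∀ i < n, x i ≤ v i}
          = ⋃ k, {x | (∀ i < n, x i ≤ v i) ∧ x n ≤ k} := by
        ext x; simp only [mem_iUnion, mem_setOf_eq]
        exact ⟨fun h => ⟨x n, h, le_rfl⟩, fun ⟨k, h, _⟩ => h⟩
      rw [hU, image_iUnion, hmono.measure_iUnion, lt_iSup_iff] at hv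
      rcases hv with ⟨k, hk⟩
      refine ⟨k, lt_of_lt_of_le hk (measure_mono (image_mono ?_))⟩
      intro x hx i hi
      rcases Nat.lt_succ_iff_lt_or_eq.mp hi with h | rfl
      · rw [Function.update_of_ne (Nat.ne_of_lt h)]; exact hx.1 i h
      · rw [Function.update_self]; exact hx.2
    choose! k hk using step
    let u : ℕ → ℕ → ℕ := fun n =>
      Nat.rec (fun _ => 0) (fun m v => Function.update v m (k m v)) n
    have husucc : ∀ n, u (n + 1) = Function.update (u n) n (k n (u n)) := fun n => rfl
    have hum : ∀ n, m' < μ (f '' {x | ∀ i < n, x i ≤ u n i}) := by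
      intro n; induction n with
      | zero =>
        have h0 : {x : ℕ → ℕ | ∀ i < 0, x i ≤ u 0 i} = univ := by ext; simp
        rw [h0, image_univ, hrange]; exact hm'
      | succ n ih => rw [husucc n]; exact hk n (u n) ih
    set g : ℕ → ℕ := fun i => u (i + 1) i with hg
    have hag : ∀ n i, i < n → u n i = g i := by
      intro n; induction n with
      | zero => intro i hi; omega
      | succ n ih =>
        intro i hi
        rcases Nat.lt_succ_iff_lt_or_eq.mp hi with h | rfl
        · rw [husucc n, Function.update_of_ne (Nat.ne_of_lt h)]; exact ih i h
        · rfl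
    have hgm : ∀ n, m' < μ (f '' {x | ∀ i < n, x i ≤ g i}) := by
      intro n
      have he : {x : ℕ → ℕ | ∀ i < n, x i ≤ g i} = {x | ∀ i < n, x i ≤ u n i} := by
        ext x
        exact forall_congr' fun i => forall_congr' fun hi => by rw [hag n i hi]
      rw [he]; exact hum n
    set C : Set (ℕ → ℕ) := {x | ∀ i, x i ≤ g i} with hC
    have hCcomp : IsCompact C := by
      have he : C = Set.pi univ (fun i => Iic (g i)) := by
        ext x; simp [hC, Set.mem_pi, Pi.le_def]
      rw [he]
      exact isCompact_univ_pi fun i => (Set.finite_Iic (g i)).isCompact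
    refine ⟨f '' C, hCcomp.image hf, by rw [← hrange]; exact image_subset_range f C, ?_⟩
    letI := upgradeIsCompletelyMetrizable α
    set D : ℕ → Set α := fun n => f '' {x | ∀ i < n, x i ≤ g i} with hD
    have hDanti : Antitone D := by
      intro a b hab
      exact image_mono fun x hx i hi => hx i (lt_of_lt_of_le hi hab)
    have hsub : (⋂ n, closure (D n)) ⊆ f '' C := by
      intro y hy
      have hx : ∀ n : ℕ, ∃ x : ℕ → ℕ, (∀ i < n, x i ≤ g i)
          ∧ dist (f x) y < 1 / (n + 1) := by
        intro n
        have hyc : y ∈ closure (D n) := mem_iInter.mp hy n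
        rcases Metric.mem_closure_iff.mp hyc (1 / (n + 1)) (by positivity) with ⟨z, hz, hdz⟩
        rcases hz with ⟨x, hxx, rfl⟩
        exact ⟨x, hxx, by rwa [dist_comm]⟩
      choose x hx1 hx2 using hx
      set x' : ℕ → ℕ → ℕ := fun n i => min (x n i) (g i) with hx'
      have hx'C : ∀ n, x' n ∈ C := fun n i => min_le_right _ _
      rcases hCcomp.tendsto_subseq hx'C with ⟨a, haC, φ, hφ, hconv⟩
      refine ⟨a, haC, ?_⟩
      have hconv' : Tendsto (fun n => x (φ n)) atTop (𝓝 a) := by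
        rw [tendsto_pi_nhds] at hconv ⊢
        intro i
        apply (hconv i).congr'
        filter_upwards [eventually_ge_atTop (i + 1)] with n hn
        have hlt : i < φ n := lt_of_lt_of_le (Nat.lt_of_lt_of_le (Nat.lt_succ_self i) hn) hφ.le_apply
        simp only [hx', Function.comp_apply, min_eq_left (hx1 (φ n) i hlt)]
      have h1 : Tendsto (fun n => f (x (φ n))) atTop (𝓝 (f a)) := (hf.tendsto a).comp hconv'
      have h2 : Tendsto (fun n => f (x (φ n))) atTop (𝓝 y) := by
        rw [tendsto_iff_dist_tendsto_zero]
        apply squeeze_zero (fun n => dist_nonneg) (fun n => (hx2 (φ n)).le)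
        exact tendsto_one_div_add_atTop_nhds_zero_nat.comp hφ.tendsto_atTop
      exact tendsto_nhds_unique h1 h2
    have hcl : Antitone fun n => closure (D n) := fun a b hab => closure_mono (hDanti hab)
    calc m' ≤ ⨅ n, μ (closure (D n)) :=
          le_iInf fun n => (lt_of_lt_of_le (hgm n) (measure_mono subset_closure)).le
      _ = μ (⋂ n, closure (D n)) :=
          (hcl.measure_iInter (fun n => isClosed_closure.measurableSet.nullMeasurableSet)
            ⟨0, measure_ne_top μ _⟩).symm
      _ ≤ μ (f '' C) := measure_mono hsub
  rcases eq_or_ne (μ s) 0 with h0 | h0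
  · exact .of_null h0
  have hfin : μ s ≠ ⊤ := measure_ne_top μ s
  have hKex : ∀ n : ℕ, ∃ K, IsCompact K ∧ K ⊆ s ∧ μ s - (n : ℝ≥0∞)⁻¹ ≤ μ K := fun n =>
    key _ (ENNReal.sub_lt_self hfin h0 (ENNReal.inv_ne_zero.mpr (ENNReal.natCast_ne_top n)))
  choose K hKc hKs hKm using hKex
  set T := ⋃ n, K n with hT
  have hTmeas : MeasurableSet T := MeasurableSet.iUnion fun n => (hKc n).isClosed.measurableSet
  have hTs : T ⊆ s := iUnion_subset hKs
  have hTm : μ s ≤ μ T := by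
    apply ENNReal.le_of_forall_pos_le_add
    intro ε hε _
    rcases ENNReal.exists_inv_nat_lt
      (show (ε : ℝ≥0∞) ≠ 0 by exact_mod_cast hε.ne') with ⟨n, hn⟩
    calc μ s ≤ μ (K n) + (n : ℝ≥0∞)⁻¹ := tsub_le_iff_right.mp (hKm n)
      _ ≤ μ T + ε := add_le_add (measure_mono (subset_iUnion K n)) hn.le
  have hdiff : μ (s \ T) = 0 := by
    have h1 : s \ T ⊆ toMeasurable μ s \ T := diff_subset_diff_left (subset_toMeasurable μ s)
    have h2 : μ (toMeasurable μ s \ T) = μ (toMeasurable μ s) - μ T :=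
      measure_diff (hTs.trans (subset_toMeasurable μ s)) hTmeas.nullMeasurableSet
        (measure_ne_top μ T)
    rw [measure_toMeasurable, le_antisymm (measure_mono hTs) hTm, tsub_self] at h2
    exact measure_mono_null h1 h2
  have hse : s = T ∪ (s \ T) := (union_diff_cancel hTs).symm
  rw [hse]
  exact hTmeas.nullMeasurableSet.union (.of_null hdiff)

theorem iUnion_prop_pos {α : Type*} {p : Prop} (hp : p) (S : Set α) :
    (⋃ (_ : p), S) = S := by ext z; simp [hp]

theorem iUnion_prop_neg {α : Type*} {p : Prop} (hp : ¬p) (S : Set α) :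
    (⋃ (_ : p), S) = ∅ := by ext z; simp [hp]

theorem analytic_inter {α : Type*} [TopologicalSpace α] [T2Space α] {s t : Set α}
    (hs : AnalyticSet s) (ht : AnalyticSet t) : AnalyticSet (s ∩ t) := by
  rw [Set.inter_eq_iInter]
  exact AnalyticSet.iInter fun b => by cases b <;> simpa

/-- The tail part of a closed-valued open-measurable multifunction on `ℂ^ℕ` is
universally open-measurable. -/
theorem stmt_16 (σ : (ℕ → ℂ) → Set ℂ)
    (hσcl : ∀ x, IsClosed (σ x))
    (hσ : ∀ U : Set ℂ, IsOpen U → MeasurableSet {x : ℕ → ℂ | (σ x ∩ U).Nonempty}) :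
    ∀ U : Set ℂ, IsOpen U → ∀ (μ : Measure (ℕ → ℂ)), IsFiniteMeasure μ →
      NullMeasurableSet
        {x : ℕ → ℂ |
          ((⋂ y ∈ {y : ℕ → ℂ | ∃ N, ∀ n ≥ N, y n = x n}, σ y) ∩ U).Nonempty} μ := by
  intro U hU μ hμ
  classical
  set F : ℕ → (ℕ → ℂ) → Set ℂ := fun N x => ⋂ y ∈ {y | ∀ n ≥ N, y n = x n}, σ y with hF
  have hFclosed : ∀ N x, IsClosed (F N x) := fun N x => isClosed_biInter fun y _ => hσcl y
  have hFanti : ∀ (N : ℕ) x, F (N + 1) x ⊆ F N x := fun N x =>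
    biInter_subset_biInter_left fun y hy n hn => hy n (le_trans (Nat.le_succ N) hn)
  have hSeq : ∀ x, (⋂ y ∈ {y : ℕ → ℂ | ∃ N, ∀ n ≥ N, y n = x n}, σ y) = ⋂ N, F N x := by
    intro x
    have : {y : ℕ → ℂ | ∃ N, ∀ n ≥ N, y n = x n} = ⋃ N, {y | ∀ n ≥ N, y n = x n} := by
      ext y; simp [mem_iUnion]
    rw [this, biInter_iUnion]
  -- the sets Q
  set Q : ℕ → Set ℂ → Set (ℕ → ℂ) :=
    fun N B => {x | ∃ y, (∀ n ≥ N, y n = x n) ∧ σ y ∩ B = ∅} with hQ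
  have hQana : ∀ (N : ℕ) (B : Set ℂ), IsOpen B → AnalyticSet (Q N B) := by
    intro N B hB
    set T : Set ((ℕ → ℂ) × (ℕ → ℂ)) :=
      {p | (∀ n ≥ N, p.2 n = p.1 n) ∧ σ p.2 ∩ B = ∅} with hT
    have hTmeas : MeasurableSet T := by
      have h1 : T = (⋂ n, ⋂ (_ : n ≥ N), {p : (ℕ → ℂ) × (ℕ → ℂ) | p.2 n = p.1 n}) ∩
          (Prod.snd ⁻¹' {y | (σ y ∩ B).Nonempty}ᶜ) := by
        ext p
        simp only [hT, mem_setOf_eq, mem_inter_iff, mem_iInter, mem_preimage, mem_compl_iff,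
          not_nonempty_iff_eq_empty]
      rw [h1]
      refine MeasurableSet.inter ?_ ?_
      · exact MeasurableSet.iInter fun n => MeasurableSet.iInter fun _ =>
          measurableSet_eq_fun (measurable_snd.eval) (measurable_fst.eval)
      · exact measurable_snd ((hσ B hB).compl)
    have himg : Q N B = Prod.fst '' T := by
      ext x
      constructor
      · rintro ⟨y, hy, hyB⟩; exact ⟨(x, y), ⟨hy, hyB⟩, rfl⟩
      · rintro ⟨⟨x', y⟩, ⟨hy, hyB⟩, rfl⟩; exact ⟨y, hy, hyB⟩
    rw [himg]
    exact hTmeas.analyticSet_image measurable_fst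
  -- countable basis
  set 𝒱 : Set (Set ℂ) := countableBasis ℂ with h𝒱
  haveI : Countable ↥𝒱 := (countable_countableBasis ℂ).to_subtype
  -- key null measurability
  have hA : ∀ (N : ℕ) (K : Set ℂ), IsCompact K →
      NullMeasurableSet {x : ℕ → ℂ | (F N x ∩ K).Nonempty} μ := by
    intro N K hK
    have hcompl : {x : ℕ → ℂ | (F N x ∩ K).Nonempty}ᶜ =
        ⋃ (FS : Finset ↥𝒱) (_ : K ⊆ ⋃ V ∈ FS, (V : Set ℂ)), ⋂ V ∈ FS, Q N ↑V := by
      ext x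
      simp only [mem_compl_iff, mem_setOf_eq, not_nonempty_iff_eq_empty, mem_iUnion]
      constructor
      · intro hemp
        have hcov : ∀ w ∈ K, ∃ V : ↥𝒱, w ∈ (V : Set ℂ) ∧ x ∈ Q N ↑V := by
          intro w hw
          have hwF : w ∉ F N x := fun hwF =>
            (eq_empty_iff_forall_notMem.mp hemp w) ⟨hwF, hw⟩
          rw [hF, mem_iInter₂] at hwF
          push_neg at hwF
          obtain ⟨y, hy, hwy⟩ := hwF
          obtain ⟨V, hV𝒱, hwV, hVsub⟩ :=
            (isBasis_countableBasis ℂ).exists_subset_of_mem_open hwy (hσcl y).isOpen_compl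
          exact ⟨⟨V, hV𝒱⟩, hwV,
            ⟨y, hy, eq_empty_iff_forall_notMem.mpr fun z hz => hVsub hz.2 hz.1⟩⟩
        set ι := {V : ↥𝒱 // x ∈ Q N ↑V}
        have hKcov : K ⊆ ⋃ i : ι, ((i : ↥𝒱) : Set ℂ) := by
          intro w hw
          obtain ⟨V, hwV, hxQ⟩ := hcov w hw
          exact mem_iUnion.mpr ⟨⟨V, hxQ⟩, hwV⟩
        obtain ⟨t, ht⟩ := hK.elim_finite_subcover (fun i : ι => ((i : ↥𝒱) : Set ℂ))
          (fun i => isOpen_of_mem_countableBasis (i : ↥𝒱).2) hKcov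
        refine ⟨t.image Subtype.val, ?_, ?_⟩
        · intro w hw
          obtain ⟨i, hit, hwi⟩ := mem_iUnion₂.mp (ht hw)
          exact mem_iUnion₂.mpr ⟨(i : ↥𝒱), Finset.mem_image_of_mem _ hit, hwi⟩
        · rw [mem_iInter₂]
          intro V hV
          obtain ⟨i, _, rfl⟩ := Finset.mem_image.mp hV
          exact i.2
      · rintro ⟨FS, hcov, hall⟩
        rw [eq_empty_iff_forall_notMem]
        rintro w ⟨hwF, hwK⟩
        obtain ⟨V, hVFS, hwV⟩ := mem_iUnion₂.mp (hcov hwK)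
        obtain ⟨y, hy, hyV⟩ := mem_iInter₂.mp hall V hVFS
        have hwy : w ∈ σ y := mem_iInter₂.mp hwF y hy
        exact (eq_empty_iff_forall_notMem.mp hyV w) ⟨hwy, hwV⟩
    have hana : AnalyticSet ({x : ℕ → ℂ | (F N x ∩ K).Nonempty}ᶜ) := by
      rw [hcompl]
      refine AnalyticSet.iUnion fun FS => ?_
      by_cases hcov : K ⊆ ⋃ V ∈ FS, (V : Set ℂ)
      · rw [iUnion_prop_pos hcov]
        classical
        refine Finset.induction_on FS ?_ ?_
        · simpa using isClosed_univ.analyticSet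
        · intro V FS' _ ih
          rw [Finset.set_biInter_insert]
          exact analytic_inter (hQana N ↑V (isOpen_of_mem_countableBasis V.2)) ih
      · rw [iUnion_prop_neg hcov]
        exact analyticSet_empty
    have := (analyticSet_nullMeasurableSet hana μ).compl
    rwa [compl_compl] at this
  -- compact exhaustion of U
  set K : ℕ → Set ℂ := fun k =>
    Metric.closedBall 0 k ∩ (⋃ w ∈ Uᶜ, Metric.ball w (1 / (k + 1)))ᶜ with hKdef
  have hKcomp : ∀ k, IsCompact (K k) := fun k =>
    (isCompact_closedBall _ _).inter_right
      (isOpen_biUnion fun w _ => Metric.isOpen_ball).isClosed_compl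
  have hKU : ∀ k, K k ⊆ U := by
    intro k z hz
    by_contra hzU
    exact hz.2 (mem_biUnion hzU (Metric.mem_ball_self (by positivity)))
  have hcover : ∀ z ∈ U, ∃ k, z ∈ K k := by
    intro z hz
    obtain ⟨ε, hε, hball⟩ := Metric.isOpen_iff.mp hU z hz
    obtain ⟨k₁, hk₁⟩ := exists_nat_one_div_lt hε
    refine ⟨max k₁ ⌈‖z‖⌉₊, ?_, ?_⟩
    · rw [Metric.mem_closedBall, dist_zero_right]
      calc ‖z‖ ≤ (⌈‖z‖⌉₊ : ℝ) := Nat.le_ceil _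
        _ ≤ ((max k₁ ⌈‖z‖⌉₊ : ℕ) : ℝ) := by exact_mod_cast le_max_right _ _
    · intro hmem
      obtain ⟨w, hwU, hwball⟩ := mem_iUnion₂.mp hmem
      have h1 : dist w z < 1 / ((max k₁ ⌈‖z‖⌉₊ : ℕ) + 1) := by
        rw [dist_comm]; exact Metric.mem_ball.mp hwball
      have h2 : (1 : ℝ) / ((max k₁ ⌈‖z‖⌉₊ : ℕ) + 1) ≤ 1 / ((k₁ : ℝ) + 1) := by
        apply one_div_le_one_div_of_le (by positivity)
        exact_mod_cast Nat.succ_le_succ (le_max_left _ _)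
      exact hwU (hball (by rw [Metric.mem_ball]; linarith))
  have hid : {x : ℕ → ℂ | ((⋂ y ∈ {y : ℕ → ℂ | ∃ N, ∀ n ≥ N, y n = x n}, σ y) ∩ U).Nonempty}
      = ⋃ k, ⋂ N, {x : ℕ → ℂ | (F N x ∩ K k).Nonempty} := by
    ext x
    simp only [mem_setOf_eq, mem_iUnion, mem_iInter]
    constructor
    · rintro ⟨w, hwS, hwU⟩
      obtain ⟨k, hk⟩ := hcover w hwU
      refine ⟨k, fun N => ⟨w, ?_, hk⟩⟩
      exact mem_iInter₂.mpr fun y hy => mem_iInter₂.mp hwS y ⟨N, hy⟩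
    · rintro ⟨k, hk⟩
      have hne := IsCompact.nonempty_iInter_of_sequence_nonempty_isCompact_isClosed
        (fun N => F N x ∩ K k)
        (fun N => inter_subset_inter_left _ (hFanti N x))
        (fun N => hk N)
        ((hKcomp k).inter_left (hFclosed 0 x))
        (fun N => (hFclosed N x).inter (hKcomp k).isClosed)
      obtain ⟨w, hw⟩ := hne
      rw [mem_iInter] at hw
      refine ⟨w, ?_, hKU k (hw 0).2⟩
      exact mem_iInter₂.mpr fun y hy => by
        obtain ⟨N, hN⟩ := hy
        exact mem_iInter₂.mp (hw N).1 y hN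
  rw [hid]
  exact NullMeasurableSet.iUnion fun k =>
    NullMeasurableSet.iInter fun N => hA N (K k) (hKcomp k)
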